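/- For every ε > 0 and Δ > 0 there exist m ∈ ℕ with m ≥ 1, scores s, s' : Fin m → ℝ with |s(j) − s'(j)| ≤ Δ for every j, and an index i, such that with ν = Lap(Δ/ε) the Laplace measure of scale Δ/ε: ν^{⊗m}({η : ∀ j ≠ i, s(i) + η(i) > s(j) + η(j)}) > exp(ε) · ν^{⊗m}({η : ∀ j ≠ i, s'(i) + η(i) > s'(j) + η(j)}). In other words, Report-Noisy-Max with under-calibrated Laplace noise of scale Δ/ε (instead of the required 2Δ/ε) does not satisfy ε-differential privacy for score functions of sensitivity Δ. -/

import Mathlib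

open MeasureTheory

/-- The Laplace measure `Lap(b)` on `ℝ`, with density `x ↦ (1/(2b))·exp(−|x|/b)`
with respect to Lebesgue measure. -/
noncomputable def lapMeasure (b : ℝ) : Measure ℝ :=
  volume.withDensity fun x => ENNReal.ofReal (1 / (2 * b) * Real.exp (-|x| / b))

namespace LapAux

open Real Set

noncomputable def pdf (b x : ℝ) : ℝ := 1 / (2 * b) * Real.exp (-|x| / b)

noncomputable def cdf (b t : ℝ) : ℝ :=
  if t ≤ 0 then Real.exp (t / b) / 2 else 1 - Real.exp (-t / b) / 2

variable {a b : ℝ}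

lemma pdf_nonneg (hb : 0 < b) (x : ℝ) : 0 ≤ pdf b x := by
  unfold pdf; positivity

lemma measurable_pdf (b : ℝ) : Measurable fun x => ENNReal.ofReal (pdf b x) := by
  unfold pdf; fun_prop

lemma measurable_cdf (b : ℝ) : Measurable (cdf b) := by
  unfold cdf
  exact Measurable.ite measurableSet_Iic (by fun_prop) (by fun_prop)

lemma cdf_nonneg (hb : 0 < b) (t : ℝ) : 0 ≤ cdf b t := by
  unfold cdf
  split_ifs with h
  · positivity
  · push_neg at h
    have h1 : Real.exp (-t / b) ≤ 1 := by
      rw [show (1:ℝ) = Real.exp 0 by rw [Real.exp_zero]]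
      apply Real.exp_le_exp.mpr
      have h2 : 0 < t / b := div_pos h hb
      rw [neg_div]
      linarith
    linarith

lemma cdf_le_one (hb : 0 < b) (t : ℝ) : cdf b t ≤ 1 := by
  unfold cdf
  split_ifs with h
  · have h1 : Real.exp (t / b) ≤ 1 := by
      rw [show (1:ℝ) = Real.exp 0 by rw [Real.exp_zero]]
      exact Real.exp_le_exp.mpr (div_nonpos_of_nonpos_of_nonneg h hb.le)
    linarith
  · linarith [Real.exp_pos (-t / b)]

lemma intOn_exp_Ioi (ha : 0 < a) (t : ℝ) :
    IntegrableOn (fun x => Real.exp (-(a * x))) (Ioi t) := by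
  simpa [neg_mul] using exp_neg_integrableOn_Ioi t ha

lemma int_exp_Ioi (ha : 0 < a) (t : ℝ) :
    ∫ x in Ioi t, Real.exp (-(a * x)) = Real.exp (-(a * t)) / a := by
  have h := integral_comp_mul_left_Ioi (fun y => Real.exp (-y)) t ha
  simp only [smul_eq_mul] at h
  rw [show (fun x => Real.exp (-(a * x))) = fun x => (fun y => Real.exp (-y)) (a * x) from rfl,
    h, integral_exp_neg_Ioi]
  field_simp

lemma intOn_exp_Iic (ha : 0 < a) (t : ℝ) :
    IntegrableOn (fun x => Real.exp (a * x)) (Iic t) := by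
  rw [← Measure.map_neg_eq_self (volume : Measure ℝ)]
  have m : MeasurableEmbedding fun x : ℝ => -x :=
    (Homeomorph.neg ℝ).measurableEmbedding
  rw [m.integrableOn_map_iff]
  have : ((fun x => Real.exp (a * x)) ∘ fun x : ℝ => -x) = fun x => Real.exp (-(a * x)) := by
    funext x; simp [mul_neg]
  rw [this, neg_preimage, neg_Iic]
  exact (integrableOn_Ici_iff_integrableOn_Ioi).mpr (intOn_exp_Ioi ha _)

lemma int_exp_Iic (ha : 0 < a) (t : ℝ) :
    ∫ x in Iic t, Real.exp (a * x) = Real.exp (a * t) / a := by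
  have h := integral_comp_neg_Iic t (fun x => Real.exp (-(a * x)))
  simp only [mul_neg, neg_neg] at h
  rw [h, int_exp_Ioi ha]
  simp [mul_neg, neg_neg]

lemma pdf_eqOn_Iic (hb : 0 < b) {t : ℝ} (ht : t ≤ 0) :
    EqOn (pdf b) (fun x => 1 / (2 * b) * Real.exp ((1 / b) * x)) (Iic t) := by
  intro x hx
  simp only [pdf]
  rw [abs_of_nonpos (le_trans hx ht)]
  congr 1
  field_simp

lemma pdf_eqOn_Ioi (hb : 0 < b) {t : ℝ} (ht : 0 ≤ t) :
    EqOn (pdf b) (fun x => 1 / (2 * b) * Real.exp (-((1 / b) * x))) (Ioi t) := by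
  intro x hx
  simp only [pdf]
  rw [abs_of_pos (lt_of_le_of_lt ht hx)]
  congr 1
  field_simp

lemma intOn_pdf_Iic (hb : 0 < b) {t : ℝ} (ht : t ≤ 0) :
    IntegrableOn (pdf b) (Iic t) := by
  have h := (intOn_exp_Iic (show (0:ℝ) < 1 / b by positivity) t).const_mul (1 / (2 * b))
  exact MeasureTheory.IntegrableOn.congr_fun h
    (fun x hx => ((pdf_eqOn_Iic hb ht) hx).symm) measurableSet_Iic

lemma intOn_pdf_Ioi (hb : 0 < b) {t : ℝ} (ht : 0 ≤ t) :
    IntegrableOn (pdf b) (Ioi t) := by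
  have h := (intOn_exp_Ioi (show (0:ℝ) < 1 / b by positivity) t).const_mul (1 / (2 * b))
  exact MeasureTheory.IntegrableOn.congr_fun h
    (fun x hx => ((pdf_eqOn_Ioi hb ht) hx).symm) measurableSet_Ioi

lemma int_pdf_Iic (hb : 0 < b) {t : ℝ} (ht : t ≤ 0) :
    ∫ x in Iic t, pdf b x = Real.exp (t / b) / 2 := by
  rw [setIntegral_congr_fun measurableSet_Iic (pdf_eqOn_Iic hb ht), MeasureTheory.integral_const_mul _ _,
    int_exp_Iic (show (0:ℝ) < 1 / b by positivity), show (1 / b) * t = t / b by ring]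
  field_simp

lemma int_pdf_Ioi (hb : 0 < b) {t : ℝ} (ht : 0 ≤ t) :
    ∫ x in Ioi t, pdf b x = Real.exp (-(t / b)) / 2 := by
  rw [setIntegral_congr_fun measurableSet_Ioi (pdf_eqOn_Ioi hb ht), MeasureTheory.integral_const_mul _ _,
    int_exp_Ioi (show (0:ℝ) < 1 / b by positivity), show (1 / b) * t = t / b by ring]
  field_simp

lemma integrable_pdf (hb : 0 < b) : Integrable (pdf b) := by
  rw [← integrableOn_univ, ← Set.Iic_union_Ioi (a := (0:ℝ)), integrableOn_union]
  exact ⟨intOn_pdf_Iic hb le_rfl, intOn_pdf_Ioi hb le_rfl⟩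

lemma lapMeasure_apply (hb : 0 < b) {s : Set ℝ} (hs : MeasurableSet s) :
    lapMeasure b s = ENNReal.ofReal (∫ x in s, pdf b x) := by
  rw [lapMeasure, withDensity_apply _ hs,
    show (fun x => ENNReal.ofReal (1 / (2 * b) * Real.exp (-|x| / b)))
      = fun x => ENNReal.ofReal (pdf b x) from rfl,
    ← ofReal_integral_eq_lintegral_ofReal ((integrable_pdf hb).integrableOn)
      (Filter.Eventually.of_forall fun x => pdf_nonneg hb x)]

lemma isFiniteMeasure (hb : 0 < b) : IsFiniteMeasure (lapMeasure b) := by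
  constructor
  rw [lapMeasure_apply hb MeasurableSet.univ]
  exact ENNReal.ofReal_lt_top

lemma lapMeasure_Iio (hb : 0 < b) (t : ℝ) :
    lapMeasure b (Iio t) = ENNReal.ofReal (cdf b t) := by
  rw [lapMeasure_apply hb measurableSet_Iio]
  congr 1
  rw [← integral_Iic_eq_integral_Iio]
  unfold cdf
  split_ifs with ht
  · exact int_pdf_Iic hb ht
  · push_neg at ht
    rw [← Set.Iic_union_Ioc_eq_Iic ht.le,
      setIntegral_union (Iic_disjoint_Ioc le_rfl) measurableSet_Ioc
        (intOn_pdf_Iic hb le_rfl) ((intOn_pdf_Ioi hb le_rfl).mono_set Ioc_subset_Ioi_self)]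
    have h0 : ∫ x in Iic (0:ℝ), pdf b x = 1 / 2 := by
      have := int_pdf_Iic hb (le_refl (0:ℝ))
      simpa using this
    have hsplit : ∫ x in Ioi (0:ℝ), pdf b x
        = (∫ x in Ioc (0:ℝ) t, pdf b x) + ∫ x in Ioi t, pdf b x := by
      rw [← setIntegral_union (Ioc_disjoint_Ioi le_rfl) measurableSet_Ioi
        ((intOn_pdf_Ioi hb le_rfl).mono_set Ioc_subset_Ioi_self) (intOn_pdf_Ioi hb ht.le),
        Ioc_union_Ioi_eq_Ioi ht.le]
    have hI0 : ∫ x in Ioi (0:ℝ), pdf b x = 1 / 2 := by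
      have := int_pdf_Ioi hb (le_refl (0:ℝ))
      simpa using this
    have hIt := int_pdf_Ioi hb ht.le
    rw [h0]
    have : ∫ x in Ioc (0:ℝ) t, pdf b x = 1 / 2 - Real.exp (-(t / b)) / 2 := by
      rw [hIt] at hsplit; linarith [hsplit.symm.trans hI0]
    rw [this, neg_div]
    ring

lemma lap_integral_main {b : ℝ} (hb : 0 < b) {c : ℝ} (hc : 0 < c) :
    ∫ x, pdf b x * cdf b (x - c) = Real.exp (-(c / b)) * (1 / 2 + c / (4 * b)) := by
  have hb' : b ≠ 0 := hb.ne'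
  have hgint : Integrable (fun x => pdf b x * cdf b (x - c)) := by
    have hm : Measurable fun x => cdf b (x - c) :=
      (measurable_cdf b).comp (measurable_id.sub_const c)
    have h := (integrable_pdf hb).bdd_mul (c := 1) hm.aestronglyMeasurable
      (Filter.Eventually.of_forall fun x => by
        rw [Real.norm_eq_abs, abs_le]
        exact ⟨by linarith [cdf_nonneg hb (x - c)], cdf_le_one hb (x - c)⟩)
    simpa [mul_comm] using h
  -- piece 1 : Iic 0
  have e1 : ∫ x in Iic (0:ℝ), pdf b x * cdf b (x - c)
      = Real.exp (-(c / b)) / 8 := by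
    have heq : EqOn (fun x => pdf b x * cdf b (x - c))
        (fun x => Real.exp (-(c / b)) / (4 * b) * Real.exp ((2 / b) * x)) (Iic 0) := by
      intro x hx
      have hx0 : x ≤ 0 := hx
      simp only [pdf, cdf, if_pos (show x - c ≤ 0 by linarith), abs_of_nonpos hx0]
      have h1 : Real.exp (-(-x) / b) * Real.exp ((x - c) / b)
          = Real.exp (-(c / b)) * Real.exp ((2 / b) * x) := by
        rw [← Real.exp_add, ← Real.exp_add]
        congr 1
        field_simp
        ring
      linear_combination (1 / (4 * b)) * h1
    rw [setIntegral_congr_fun measurableSet_Iic heq, MeasureTheory.integral_const_mul _ _,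
      int_exp_Iic (show (0:ℝ) < 2 / b by positivity)]
    rw [mul_zero, Real.exp_zero]
    field_simp
    ring
  -- piece 2 : Ioc 0 c
  have e2 : ∫ x in Ioc (0:ℝ) c, pdf b x * cdf b (x - c)
      = Real.exp (-(c / b)) * (c / (4 * b)) := by
    have heq : EqOn (fun x => pdf b x * cdf b (x - c))
        (fun _ => Real.exp (-(c / b)) / (4 * b)) (Ioc 0 c) := by
      intro x hx
      simp only [pdf, cdf, if_pos (show x - c ≤ 0 by linarith [hx.2]),
        abs_of_pos hx.1]
      have h1 : Real.exp (-x / b) * Real.exp ((x - c) / b) = Real.exp (-(c / b)) := by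
        rw [← Real.exp_add]
        congr 1
        field_simp
        ring
      linear_combination (1 / (4 * b)) * h1
    rw [setIntegral_congr_fun measurableSet_Ioc heq, setIntegral_const, Real.volume_real_Ioc,
      smul_eq_mul, max_eq_left (by linarith)]
    field_simp
    ring
  -- piece 3 : Ioi c
  have e3 : ∫ x in Ioi c, pdf b x * cdf b (x - c)
      = Real.exp (-(c / b)) / 2 - Real.exp (-(c / b)) / 8 := by
    have heq : EqOn (fun x => pdf b x * cdf b (x - c))
        (fun x => 1 / (2 * b) * Real.exp (-((1 / b) * x))
          - Real.exp (c / b) / (4 * b) * Real.exp (-((2 / b) * x))) (Ioi c) := by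
      intro x hx
      have hx0 : c < x := hx
      simp only [pdf, cdf, if_neg (show ¬ x - c ≤ 0 by push_neg; linarith),
        abs_of_pos (lt_trans hc hx0)]
      have h1 : Real.exp (-x / b) = Real.exp (-((1 / b) * x)) := by
        congr 1; field_simp
      have h2 : Real.exp (-x / b) * Real.exp (-(x - c) / b)
          = Real.exp (c / b) * Real.exp (-((2 / b) * x)) := by
        rw [← Real.exp_add, ← Real.exp_add]
        congr 1
        field_simp
        ring
      linear_combination (1 / (2 * b)) * h1 - (1 / (4 * b)) * h2
    rw [setIntegral_congr_fun measurableSet_Ioi heq]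
    rw [integral_sub
      (((intOn_exp_Ioi (show (0:ℝ) < 1 / b by positivity) c).const_mul _))
      (((intOn_exp_Ioi (show (0:ℝ) < 2 / b by positivity) c).const_mul _))]
    rw [MeasureTheory.integral_const_mul _ _, MeasureTheory.integral_const_mul _ _,
      int_exp_Ioi (show (0:ℝ) < 1 / b by positivity),
      int_exp_Ioi (show (0:ℝ) < 2 / b by positivity)]
    have h3 : Real.exp (c / b) * Real.exp (-((2 / b) * c)) = Real.exp (-(c / b)) := by
      rw [← Real.exp_add]
      congr 1
      field_simp
      ring
    field_simp at h3 ⊢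
    linear_combination (-8) * h3
  -- combine
  have hIic : ∫ x in Iic c, pdf b x * cdf b (x - c)
      = (∫ x in Iic (0:ℝ), pdf b x * cdf b (x - c))
        + ∫ x in Ioc (0:ℝ) c, pdf b x * cdf b (x - c) := by
    rw [← setIntegral_union (Iic_disjoint_Ioc le_rfl) measurableSet_Ioc
      hgint.integrableOn hgint.integrableOn, Set.Iic_union_Ioc_eq_Iic hc.le]
  have huniv : ∫ x, pdf b x * cdf b (x - c)
      = (∫ x in Iic c, pdf b x * cdf b (x - c))
        + ∫ x in Ioi c, pdf b x * cdf b (x - c) := by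
    rw [← setIntegral_union (Iic_disjoint_Ioi le_rfl) measurableSet_Ioi
      hgint.integrableOn hgint.integrableOn, Set.Iic_union_Ioi,
      Measure.restrict_univ]
  rw [huniv, hIic, e1, e2, e3]
  ring

lemma lap_pi_two {b : ℝ} (hb : 0 < b) {c : ℝ} (hc : 0 < c) :
    (Measure.pi fun _ : Fin 2 => lapMeasure b) {η : Fin 2 → ℝ | η 1 + c < η 0}
      = ENNReal.ofReal (Real.exp (-(c / b)) * (1 / 2 + c / (4 * b))) := by
  haveI := isFiniteMeasure hb
  have hF : MeasurableSet {p : ℝ × ℝ | p.2 + c < p.1} :=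
    measurableSet_lt (measurable_snd.add_const c) measurable_fst
  have hpre : (MeasurableEquiv.finTwoArrow ⁻¹' {p : ℝ × ℝ | p.2 + c < p.1})
      = {η : Fin 2 → ℝ | η 1 + c < η 0} := by
    ext η
    simp [MeasurableEquiv.finTwoArrow_apply]
  rw [← hpre,
    (measurePreserving_finTwoArrow (lapMeasure b)).measure_preimage hF.nullMeasurableSet,
    Measure.prod_apply hF]
  have hinner : ∀ x : ℝ,
      lapMeasure b (Prod.mk x ⁻¹' {p : ℝ × ℝ | p.2 + c < p.1})
        = ENNReal.ofReal (cdf b (x - c)) := by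
    intro x
    have hs : (Prod.mk x ⁻¹' {p : ℝ × ℝ | p.2 + c < p.1}) = Iio (x - c) := by
      ext y
      simp only [mem_preimage, mem_setOf_eq, mem_Iio]
      constructor <;> intro h <;> linarith
    rw [hs, lapMeasure_Iio hb]
  simp_rw [hinner]
  have hg : Measurable fun x : ℝ => ENNReal.ofReal (cdf b (x - c)) :=
    ((measurable_cdf b).comp (measurable_id.sub_const c)).ennreal_ofReal
  rw [lapMeasure,
    show (fun x => ENNReal.ofReal (1 / (2 * b) * Real.exp (-|x| / b)))
      = fun x => ENNReal.ofReal (pdf b x) from rfl,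
    lintegral_withDensity_eq_lintegral_mul _ (measurable_pdf b) hg]
  have hmul : ∀ x : ℝ,
      ((fun x => ENNReal.ofReal (pdf b x)) * fun x => ENNReal.ofReal (cdf b (x - c))) x
        = ENNReal.ofReal (pdf b x * cdf b (x - c)) := by
    intro x
    simp only [Pi.mul_apply]
    exact (ENNReal.ofReal_mul (pdf_nonneg hb x)).symm
  rw [lintegral_congr hmul]
  have hgint : Integrable (fun x => pdf b x * cdf b (x - c)) := by
    have hm : Measurable fun x => cdf b (x - c) :=
      (measurable_cdf b).comp (measurable_id.sub_const c)
    have h := (integrable_pdf hb).bdd_mul (c := 1) hm.aestronglyMeasurable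
      (Filter.Eventually.of_forall fun x => by
        rw [Real.norm_eq_abs, abs_le]
        exact ⟨by linarith [cdf_nonneg hb (x - c)], cdf_le_one hb (x - c)⟩)
    simpa [mul_comm] using h
  rw [← ofReal_integral_eq_lintegral_ofReal hgint
    (Filter.Eventually.of_forall fun x => mul_nonneg (pdf_nonneg hb x) (cdf_nonneg hb _))]
  rw [lap_integral_main hb hc]

end LapAux

open LapAux in
/-- Report-Noisy-Max with under-calibrated Laplace noise of scale `Δ/ε` (instead of the
required `2Δ/ε`) does not satisfy `ε`-differential privacy for score functions of
sensitivity `Δ`: some pair of neighboring score vectors and some index violate the `ε`-DP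
inequality. -/
theorem report_noisy_max_undercalibrated_not_dp (ε Δ : ℝ) (hε : 0 < ε) (hΔ : 0 < Δ) :
    ∃ m : ℕ, 1 ≤ m ∧ ∃ s s' : Fin m → ℝ, (∀ j, |s j - s' j| ≤ Δ) ∧ ∃ i : Fin m,
      ENNReal.ofReal (Real.exp ε) *
          (Measure.pi fun _ : Fin m => lapMeasure (Δ / ε))
            {η : Fin m → ℝ | ∀ j, j ≠ i → s' i + η i > s' j + η j} <
        (Measure.pi fun _ : Fin m => lapMeasure (Δ / ε))
          {η : Fin m → ℝ | ∀ j, j ≠ i → s i + η i > s j + η j} := by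
  have hb : (0:ℝ) < Δ / ε := div_pos hΔ hε
  set b := Δ / ε with hbdef
  have hq1 : Real.exp (-ε) < 1 := by
    have := Real.exp_lt_exp.mpr (neg_lt_zero.mpr hε)
    rwa [Real.exp_zero] at this
  have hq0 : (0:ℝ) < Real.exp (-ε) := Real.exp_pos _
  set q := Real.exp (-ε) with hqdef
  have h1q : 0 < 1 - q := by linarith
  set c₁ := 2 * Δ / (1 - q) with hc1def
  have hc₁ : 0 < c₁ := by positivity
  set c₂ := c₁ + 2 * Δ with hc2def
  have hc₂ : 0 < c₂ := by positivity
  refine ⟨2, one_le_two, ![Δ, Δ + c₁], ![0, c₂], ?_, 0, ?_⟩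
  · intro j
    by_cases hj : j = 0
    · subst hj
      simp only [Matrix.cons_val_zero, sub_zero, abs_of_pos hΔ, le_refl]
    · have hj1 := Fin.eq_one_of_ne_zero j hj
      subst hj1
      simp only [Matrix.cons_val_one, Matrix.head_cons, Matrix.cons_val_zero]
      have h : Δ + c₁ - c₂ = -Δ := by rw [hc2def]; ring
      rw [h, abs_neg, abs_of_pos hΔ]
  · have hs' : {η : Fin 2 → ℝ | ∀ j, j ≠ (0 : Fin 2) →
        ![(0:ℝ), c₂] 0 + η 0 > ![(0:ℝ), c₂] j + η j} = {η : Fin 2 → ℝ | η 1 + c₂ < η 0} := by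
      ext η
      simp only [Set.mem_setOf_eq]
      constructor
      · intro h
        have h1 := h 1 (by decide)
        simp only [Matrix.cons_val_zero, Matrix.cons_val_one, Matrix.head_cons] at h1
        linarith
      · intro h j hj
        have hj1 := Fin.eq_one_of_ne_zero j hj
        subst hj1
        simp only [Matrix.cons_val_zero, Matrix.cons_val_one, Matrix.head_cons]
        linarith
    have hs : {η : Fin 2 → ℝ | ∀ j, j ≠ (0 : Fin 2) →
        ![Δ, Δ + c₁] 0 + η 0 > ![Δ, Δ + c₁] j + η j} = {η : Fin 2 → ℝ | η 1 + c₁ < η 0} := by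
      ext η
      simp only [Set.mem_setOf_eq]
      constructor
      · intro h
        have h1 := h 1 (by decide)
        simp only [Matrix.cons_val_zero, Matrix.cons_val_one, Matrix.head_cons] at h1
        linarith
      · intro h j hj
        have hj1 := Fin.eq_one_of_ne_zero j hj
        subst hj1
        simp only [Matrix.cons_val_zero, Matrix.cons_val_one, Matrix.head_cons]
        linarith
    rw [hs, hs', lap_pi_two hb hc₁, lap_pi_two hb hc₂,
      ← ENNReal.ofReal_mul (Real.exp_pos ε).le,
      ENNReal.ofReal_lt_ofReal_iff (by positivity)]
    have hε' : ε ≠ 0 := hε.ne'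
    have hΔ' : Δ ≠ 0 := hΔ.ne'
    have hcb2 : c₂ / b = c₁ / b + 2 * ε := by
      rw [hc2def, hbdef]
      field_simp
    have hexp : Real.exp (-(c₂ / b)) = Real.exp (-(c₁ / b)) * Real.exp (-(2 * ε)) := by
      rw [← Real.exp_add]
      congr 1
      rw [hcb2]
      ring
    have hqmul : Real.exp ε * Real.exp (-(2 * ε)) = q := by
      rw [hqdef, ← Real.exp_add]
      congr 1
      ring
    have key : q * (1 / 2 + c₂ / (4 * b)) < 1 / 2 + c₁ / (4 * b) := by
      have hc1q : (1 - q) * c₁ = 2 * Δ := by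
        rw [hc1def]
        field_simp
      have hnum : q * (1 / 2 + c₂ / (4 * b)) - (1 / 2 + c₁ / (4 * b))
          = (q * (2 * b + c₂) - (2 * b + c₁)) / (4 * b) := by
        field_simp
        ring
      have hneg : q * (2 * b + c₂) - (2 * b + c₁) < 0 := by
        have hp1 : 0 < (1 - q) * b := mul_pos h1q hb
        have hp2 : 0 < (1 - q) * Δ := mul_pos h1q hΔ
        rw [hc2def]
        nlinarith [hc1q, hp1, hp2]
      have := div_neg_of_neg_of_pos hneg (by positivity : (0:ℝ) < 4 * b)
      linarith [hnum ▸ this]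
    calc Real.exp ε * (Real.exp (-(c₂ / b)) * (1 / 2 + c₂ / (4 * b)))
        = Real.exp (-(c₁ / b)) * ((Real.exp ε * Real.exp (-(2 * ε)))
            * (1 / 2 + c₂ / (4 * b))) := by rw [hexp]; ring
      _ = Real.exp (-(c₁ / b)) * (q * (1 / 2 + c₂ / (4 * b))) := by rw [hqmul]
      _ < Real.exp (-(c₁ / b)) * (1 / 2 + c₁ / (4 * b)) :=
          mul_lt_mul_of_pos_left key (Real.exp_pos _)
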